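/- Let G be a shifted graph on vertex set {1,...,n} whose largest linear forest has exactly k−1 edges. Then there exists an integer m with ⌈(k+1)/2⌉ ≤ m ≤ k such that G is a subgraph of H(n,k,m), where H(n,k,m) is the graph on {1,...,n} whose edges are all pairs within A = {1,...,m} together with all pairs between C = {1,...,k−m} and B = {m+1,...,n}. -/

import Mathlib

open SimpleGraph Finset

/-- `G` contains a linear forest with `k` edges: a subgraph that is acyclic
with maximum degree at most 2 and exactly `k` edges. -/
def containsLinearForest {V : Type*} (G : SimpleGraph V) (k : ℕ) : Prop :=
  ∃ H : SimpleGraph V, H ≤ G ∧ H.IsAcyclic ∧ (∀ v, (H.neighborSet v).ncard ≤ 2) ∧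
    H.edgeSet.ncard = k

/-- `G` contains a matching with `k` edges. -/
def containsMatching {V : Type*} (G : SimpleGraph V) (k : ℕ) : Prop :=
  ∃ H : SimpleGraph V, H ≤ G ∧ (∀ v, (H.neighborSet v).ncard ≤ 1) ∧ H.edgeSet.ncard = k

/-- Number of `s`-cliques (copies of `K_s`) in `G`. -/
noncomputable def cliqueCount {V : Type*} (G : SimpleGraph V) (s : ℕ) : ℕ :=
  {S : Finset V | G.IsNClique s S}.ncard

/-- Number of copies of `K*_{s,t}` in `G`: pairs `(W₁, W₂)` of disjoint vertex sets with
`|W₁| = s`, `|W₂| = t`, `W₁` a clique and all `W₁`–`W₂` edges present. -/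
noncomputable def kstCount {V : Type*} (G : SimpleGraph V) (s t : ℕ) : ℕ :=
  {p : Finset V × Finset V | p.1.card = s ∧ p.2.card = t ∧ Disjoint p.1 p.2 ∧
    G.IsClique (p.1 : Set V) ∧ ∀ a ∈ p.1, ∀ b ∈ p.2, G.Adj a b}.ncard

open scoped Classical in
/-- Kelmans shifting operation on a single edge. -/
noncomputable def shiftEdge {n : ℕ} (G : SimpleGraph (Fin n)) (i j : Fin n)
    (e : Sym2 (Fin n)) : Sym2 (Fin n) :=
  if j ∈ e ∧ i ∉ e ∧ e.map (fun x => if x = j then i else x) ∉ G.edgeSet then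
    e.map (fun x => if x = j then i else x)
  else e

/-- The shifted graph `S_{ij}(G)`. -/
noncomputable def shiftGraph {n : ℕ} (G : SimpleGraph (Fin n)) (i j : Fin n) :
    SimpleGraph (Fin n) :=
  SimpleGraph.fromEdgeSet (shiftEdge G i j '' G.edgeSet)

/-- `G` is a shifted graph: it is invariant under all shifting operations. -/
def IsShifted {n : ℕ} (G : SimpleGraph (Fin n)) : Prop :=
  ∀ i j : Fin n, i < j → shiftGraph G i j = G

/-- The graph `H(n,k,m)` on vertex set `Fin n`: all pairs within `A = {0,…,m-1}` together
with all pairs between `C = {0,…,k-m-1}` and `B = {m,…,n-1}`. -/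
def Hgraph (n k m : ℕ) : SimpleGraph (Fin n) where
  Adj a b := a ≠ b ∧ (((a : ℕ) < m ∧ (b : ℕ) < m) ∨
    ((a : ℕ) < k - m ∧ m ≤ (b : ℕ)) ∨ ((b : ℕ) < k - m ∧ m ≤ (a : ℕ)))
  symm := by refine ⟨?_⟩; rintro a b ⟨h1, h2⟩; exact ⟨h1.symm, by tauto⟩
  loopless := by refine ⟨?_⟩; rintro a ⟨h1, -⟩; exact h1 rfl

section AuxLemmas

open SimpleGraph Walk

variable {V : Type*}

private lemma pendant_acyclic {H : SimpleGraph V} {u v : V} (hH : H.IsAcyclic) (huv : u ≠ v)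
    (hv : ∀ y, ¬ H.Adj v y) : (H ⊔ fromEdgeSet {s(u,v)}).IsAcyclic := by
  classical
  have hnbr : ∀ z, (H ⊔ fromEdgeSet {s(u,v)}).Adj v z → z = u := by
    intro z hz
    rcases hz with hz | hz
    · exact absurd hz (hv z)
    · rw [fromEdgeSet_adj, Set.mem_singleton_iff] at hz
      rcases Sym2.eq_iff.mp hz.1 with ⟨h1, h2⟩ | ⟨h1, h2⟩
      · exact absurd h1.symm huv
      · exact h2
  intro x c hc
  by_cases he : s(u,v) ∈ c.edges
  · have hvs : v ∈ c.support := Walk.snd_mem_support_of_mem_edges c he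
    have hc' : (c.rotate v hvs).IsCycle := hc.rotate hvs
    generalize c.rotate v hvs = c' at hc'
    cases c' with
    | nil => exact hc'.ne_nil rfl
    | @cons _ y _ h q =>
      rw [Walk.cons_isCycle_iff] at hc'
      obtain ⟨hq, hedge⟩ := hc'
      have hyu : y = u := hnbr y h
      have hrev : q.reverse.IsPath := hq.reverse
      have hedge' : s(v, y) ∉ q.reverse.edges := by
        rw [Walk.edges_reverse, List.mem_reverse]; exact hedge
      have hrmem : s(v, y) ∈ q.reverse.edges := by
        generalize q.reverse = w at hrev hedge'
        cases w with
        | nil => exact absurd rfl h.ne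
        | @cons _ z _ h2 r =>
          have hzy : z = y := (hnbr z h2).trans hyu.symm
          subst hzy
          rw [Walk.cons_isPath_iff] at hrev
          have : r = Walk.nil := Walk.isPath_iff_eq_nil.mp hrev.1
          subst this
          simp
      exact hedge' hrmem
  · have hsub : ∀ e ∈ c.edges, e ∈ H.edgeSet := by
      intro e hec
      have hmem := Walk.edges_subset_edgeSet c hec
      rw [edgeSet_sup, edgeSet_fromEdgeSet] at hmem
      rcases hmem with hm | hm
      · exact hm
      · exact absurd (hm.1 ▸ hec) he
    exact hH (c.transfer H hsub) (hc.transfer hsub)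

private lemma spanningCoe_sup' {G : SimpleGraph V} (A B : G.Subgraph) :
    (A ⊔ B).spanningCoe = A.spanningCoe ⊔ B.spanningCoe := rfl

private lemma path_toSubgraph_acyclic {G : SimpleGraph V} {u v : V} {p : G.Walk u v}
    (hp : p.IsPath) : p.toSubgraph.spanningCoe.IsAcyclic := by
  classical
  induction p with
  | nil =>
    have : ∀ w : V, (G.singletonSubgraph w).spanningCoe = ⊥ := by
      intro w; ext a b; simp [singletonSubgraph_adj]
    simp only [Walk.toSubgraph]
    rw [this]; exact isAcyclic_bot
  | @cons a b w h q ih =>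
    rw [Walk.cons_isPath_iff] at hp
    have key : (Walk.cons h q).toSubgraph.spanningCoe
        = q.toSubgraph.spanningCoe ⊔ fromEdgeSet {s(b, a)} := by
      ext x y
      simp only [Walk.toSubgraph, spanningCoe_sup', sup_adj, fromEdgeSet_adj,
        Set.mem_singleton_iff, Subgraph.spanningCoe_adj, subgraphOfAdj_adj]
      constructor
      · rintro (hxy | hxy)
        · refine Or.inr ⟨?_, ?_⟩
          · rw [Sym2.eq_iff] at hxy ⊢; tauto
          · rintro rfl
            rw [Sym2.eq_iff] at hxy
            rcases hxy with ⟨rfl, rfl⟩ | ⟨rfl, rfl⟩ <;> exact h.ne rfl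
        · exact Or.inl hxy
      · rintro (hxy | hxy)
        · exact Or.inr hxy
        · refine Or.inl ?_
          rw [Sym2.eq_iff] at hxy ⊢; tauto
    rw [key]
    refine pendant_acyclic (ih hp.1) h.ne' ?_
    intro y hy
    have : a ∈ q.toSubgraph.verts := (q.toSubgraph).edge_vert hy
    rw [Walk.mem_verts_toSubgraph] at this
    exact hp.2 this

private lemma path_toSubgraph_deg {G : SimpleGraph V} {u v : V} {p : G.Walk u v}
    (hp : p.IsPath) :
    (∀ w, (p.toSubgraph.neighborSet w).ncard ≤ 2) ∧ (p.toSubgraph.neighborSet u).ncard ≤ 1 := by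
  classical
  induction p with
  | nil =>
    simp [Walk.toSubgraph, neighborSet_singletonSubgraph]
  | @cons a b w h q ih =>
    rw [Walk.cons_isPath_iff] at hp
    obtain ⟨ih2, ih1⟩ := ih hp.1
    have hnbra : q.toSubgraph.neighborSet a = ∅ := by
      ext z
      simp only [Set.mem_empty_iff_false, iff_false, Subgraph.mem_neighborSet]
      intro hz
      exact hp.2 ((Walk.mem_verts_toSubgraph q).mp ((q.toSubgraph).edge_vert hz))
    have hsup : ∀ w', ((Walk.cons h q).toSubgraph.neighborSet w') =
        (G.subgraphOfAdj h).neighborSet w' ∪ q.toSubgraph.neighborSet w' := by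
      intro w'; rw [Walk.toSubgraph, Subgraph.neighborSet_sup]
    constructor
    · intro w'
      rw [hsup]
      by_cases hwa : w' = a
      · subst hwa
        rw [neighborSet_fst_subgraphOfAdj, hnbra]
        simp
      · by_cases hwb : w' = b
        · subst hwb
          rw [neighborSet_snd_subgraphOfAdj]
          refine le_trans (Set.ncard_union_le _ _) ?_
          have : ({a} : Set V).ncard = 1 := Set.ncard_singleton a
          omega
        · rw [neighborSet_subgraphOfAdj_of_ne_of_ne h hwa hwb]
          simpa using ih2 w'
    · rw [hsup, neighborSet_fst_subgraphOfAdj, hnbra]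
      simp

private lemma spanningCoe_edgeSet {G : SimpleGraph V} (A : G.Subgraph) :
    A.spanningCoe.edgeSet = A.edgeSet := by
  ext e
  induction e with
  | _ x y => simp [Subgraph.mem_edgeSet]

private lemma walk_containsLF {G : SimpleGraph V} {u v : V} (p : G.Walk u v) (hp : p.IsPath) :
    containsLinearForest G p.length := by
  classical
  refine ⟨p.toSubgraph.spanningCoe, Subgraph.spanningCoe_le _, path_toSubgraph_acyclic hp,
    ?_, ?_⟩
  · intro w
    exact (path_toSubgraph_deg hp).1 w
  · rw [spanningCoe_edgeSet, Walk.edgeSet_toSubgraph]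
    have h1 : p.edgeSet = (p.edges.toFinset : Set (Sym2 V)) := by
      ext e; simp
    rw [h1, Set.ncard_coe_finset, List.toFinset_card_of_nodup hp.isTrail.edges_nodup,
      Walk.length_edges]

/-- Auxiliary graph on `Fin n` whose edges are the pairs with sum at most `K`. -/
def sumAdjGraph (n K : ℕ) : SimpleGraph (Fin n) :=
  SimpleGraph.fromRel (fun a b => (a : ℕ) + (b : ℕ) ≤ K)

/-- The zigzag Hamiltonian path `c+d, c, c+d-1, c+1, …` in `sumAdjGraph`. -/
def zig (n K : ℕ) : (d c : ℕ) → 2 * c + d ≤ K → (hv : c + d < n) →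
    (sumAdjGraph n K).Walk ⟨c + d, hv⟩ ⟨c + d / 2, by omega⟩
  | 0, c, h2, hv => SimpleGraph.Walk.nil.copy rfl (Fin.val_injective (by simp))
  | 1, c, h2, hv =>
      (SimpleGraph.Walk.cons
        (id ⟨Fin.ne_of_val_ne (show c + 1 ≠ c by omega),
            Or.inl (by show c + 1 + c ≤ K; omega)⟩ :
          (sumAdjGraph n K).Adj ⟨c + 1, hv⟩ ⟨c, by omega⟩)
        SimpleGraph.Walk.nil).copy rfl (Fin.val_injective (by simp))
  | (d+2), c, h2, hv =>
      (SimpleGraph.Walk.cons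
        (id ⟨Fin.ne_of_val_ne (show c + (d + 2) ≠ c by omega),
            Or.inl (by show c + (d + 2) + c ≤ K; omega)⟩ :
          (sumAdjGraph n K).Adj ⟨c + (d + 2), hv⟩ ⟨c, by omega⟩)
        (SimpleGraph.Walk.cons
          (id ⟨Fin.ne_of_val_ne (show c ≠ c + 1 + d by omega),
              Or.inl (by show c + (c + 1 + d) ≤ K; omega)⟩ :
            (sumAdjGraph n K).Adj ⟨c, by omega⟩ ⟨c + 1 + d, by omega⟩)
          (zig n K d (c+1) (by omega) (by omega)))).copy rfl
        (Fin.val_injective (by show c + 1 + d / 2 = c + (d + 2) / 2; omega))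

theorem zig_length (n K : ℕ) : ∀ (d c : ℕ) (h2 : 2 * c + d ≤ K) (hv : c + d < n),
    (zig n K d c h2 hv).length = d
  | 0, c, h2, hv => by simp [zig]
  | 1, c, h2, hv => by simp [zig]
  | (d+2), c, h2, hv => by
      simp only [zig, SimpleGraph.Walk.length_copy, SimpleGraph.Walk.length_cons,
        zig_length n K d (c+1)]

theorem zig_support (n K : ℕ) : ∀ (d c : ℕ) (h2 : 2 * c + d ≤ K) (hv : c + d < n),
    ∀ x ∈ (zig n K d c h2 hv).support, c ≤ (x : ℕ) ∧ (x : ℕ) ≤ c + d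
  | 0, c, h2, hv => by
      intro x hx
      simp [zig] at hx
      subst hx; simp
  | 1, c, h2, hv => by
      intro x hx
      simp [zig, SimpleGraph.Walk.support_cons] at hx
      rcases hx with rfl | rfl <;> simp
  | (d+2), c, h2, hv => by
      intro x hx
      simp only [zig, SimpleGraph.Walk.support_copy, SimpleGraph.Walk.support_cons,
        List.mem_cons] at hx
      rcases hx with rfl | rfl | hx
      · simp
      · simp
      · have := zig_support n K d (c+1) (by omega) (by omega) x hx
        omega

theorem zig_isPath (n K : ℕ) : ∀ (d c : ℕ) (h2 : 2 * c + d ≤ K) (hv : c + d < n),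
    (zig n K d c h2 hv).IsPath
  | 0, c, h2, hv => by simp [zig]
  | 1, c, h2, hv => by
      simp [zig, SimpleGraph.Walk.cons_isPath_iff]
  | (d+2), c, h2, hv => by
      have hpath := zig_isPath n K d (c+1) (by omega) (by omega)
      have hsupp := zig_support n K d (c+1) (by omega) (by omega)
      simp only [zig, SimpleGraph.Walk.isPath_copy, SimpleGraph.Walk.cons_isPath_iff,
        SimpleGraph.Walk.support_cons, List.mem_cons]
      refine ⟨⟨hpath, ?_⟩, ?_⟩
      · intro hmem
        have h' : c + 1 ≤ c := by simpa using (hsupp _ hmem).1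
        omega
      · push_neg
        constructor
        · exact Fin.ne_of_val_ne (show c + (d + 2) ≠ c by omega)
        · intro hmem
          have h' : c + (d + 2) ≤ c + 1 + d := by simpa using (hsupp _ hmem).2
          omega

lemma shifted_lower {n : ℕ} {G : SimpleGraph (Fin n)} (hsh : IsShifted G) {a b c : Fin n}
    (hab : G.Adj a b) (hcb : c < b) (hca : c ≠ a) : G.Adj a c := by
  classical
  by_cases h : G.Adj a c
  · exact h
  · exfalso
    have hG := hsh c b hcb
    have hmap : Sym2.map (fun x => if x = b then c else x) s(a, b) = s(a, c) := by
      rw [Sym2.map_pair_eq]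
      simp [hab.ne]
    have hcond : b ∈ s(a, b) ∧ c ∉ s(a, b) ∧
        Sym2.map (fun x => if x = b then c else x) s(a, b) ∉ G.edgeSet := by
      refine ⟨by simp, ?_, ?_⟩
      · rw [Sym2.mem_iff]
        push_neg
        exact ⟨hca, hcb.ne⟩
      · rw [hmap]
        exact fun hmem => h hmem
    have hshift : shiftEdge G c b s(a, b) = s(a, c) := by
      rw [shiftEdge, if_pos hcond, hmap]
    have hmem : s(a, c) ∈ shiftEdge G c b '' G.edgeSet :=
      ⟨s(a, b), hab, hshift⟩
    have hadj : (shiftGraph G c b).Adj a c := by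
      rw [shiftGraph, fromEdgeSet_adj]
      exact ⟨hmem, fun hac => hca (hac.symm)⟩
    rw [hG] at hadj
    exact h hadj

lemma shifted_le_adj {n : ℕ} {G : SimpleGraph (Fin n)} (hsh : IsShifted G) {a b x y : Fin n}
    (hab : G.Adj a b) (hx : x ≤ a) (hy : y ≤ b) (hxy : x ≠ y) : G.Adj x y := by
  classical
  by_cases hya : y = a
  · subst hya
    have hxlt : x < b := lt_of_lt_of_le (lt_of_le_of_ne hx hxy) hy
    exact (shifted_lower hsh hab hxlt hxy).symm
  · have hay : G.Adj a y := by
      rcases eq_or_lt_of_le hy with rfl | hlt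
      · exact hab
      · exact shifted_lower hsh hab hlt hya
    rcases eq_or_lt_of_le hx with rfl | hlt
    · exact hay
    · exact (shifted_lower hsh hay.symm hlt hxy).symm

end AuxLemmas

/-- A shifted graph whose largest linear forest has exactly `k-1` edges is a subgraph of
`H(n,k,m)` for some `⌈(k+1)/2⌉ ≤ m ≤ k`.  (Note `⌈(k+1)/2⌉ = (k+2)/2` in `ℕ`.) -/


theorem stmt4 {n k : ℕ} (G : SimpleGraph (Fin n)) (hsh : IsShifted G)
    (h1 : containsLinearForest G (k - 1)) (h2 : ¬ containsLinearForest G k) :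
    ∃ m : ℕ, (k + 2) / 2 ≤ m ∧ m ≤ k ∧ G ≤ Hgraph n k m := by
  classical
  rcases Nat.eq_zero_or_pos k with rfl | hkpos
  · refine absurd ⟨⊥, bot_le, isAcyclic_bot, fun v => ?_, ?_⟩ h2
    · have hns : (⊥ : SimpleGraph (Fin n)).neighborSet v = ∅ := by ext; simp
      rw [hns]; simp
    · rw [edgeSet_bot]; simp
  by_contra hcon
  push_neg at hcon
  have hbad : ∀ m : ℕ, (k + 2) / 2 ≤ m → m ≤ k →
      ∃ a b : Fin n, G.Adj a b ∧ (a : ℕ) < (b : ℕ) ∧ k - m ≤ (a : ℕ) ∧ m ≤ (b : ℕ) := by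
    intro m hm1 hm2
    have hnle := hcon m hm1 hm2
    have hnle' : ¬ ∀ a b : Fin n, G.Adj a b → (Hgraph n k m).Adj a b := by
      intro hforall
      exact hnle (fun a b hab => hforall a b hab)
    push_neg at hnle'
    obtain ⟨a, b, hab, hnadj⟩ := hnle'
    have hcore : ¬ ((((a : ℕ) < m ∧ (b : ℕ) < m) ∨
        ((a : ℕ) < k - m ∧ m ≤ (b : ℕ)) ∨ ((b : ℕ) < k - m ∧ m ≤ (a : ℕ)))) :=
      fun hq => hnadj ⟨hab.ne, hq⟩
    rcases lt_trichotomy (a : ℕ) (b : ℕ) with hlt | heq | hlt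
    · exact ⟨a, b, hab, hlt, by omega, by omega⟩
    · exact absurd (Fin.val_injective heq) hab.ne
    · exact ⟨b, a, hab.symm, hlt, by omega, by omega⟩
  obtain ⟨a0, b0, hab0, hlt0, ha0, hb0⟩ := hbad k (by omega) le_rfl
  have hnk : k < n := lt_of_le_of_lt hb0 b0.isLt
  have key : ∀ (x y : ℕ) (hx : x < n) (hy : y < n), x < y → x + y ≤ k →
      G.Adj ⟨x, hx⟩ ⟨y, hy⟩ := by
    intro x y hx hy hxy hsum
    obtain ⟨a, b, hab, hltab, ha, hb⟩ := hbad (k - x) (by omega) (by omega)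
    refine shifted_le_adj hsh hab ?_ ?_ ?_
    · show x ≤ (a : ℕ)
      omega
    · show y ≤ (b : ℕ)
      omega
    · exact Fin.ne_of_val_ne (show x ≠ y by omega)
  have hle : sumAdjGraph n k ≤ G := by
    intro u v huv
    obtain ⟨hne, hsum⟩ := huv
    have hsum' : (u : ℕ) + (v : ℕ) ≤ k := by
      rcases hsum with h | h
      · exact h
      · omega
    rcases lt_trichotomy (u : ℕ) (v : ℕ) with hlt | heq | hlt
    · have := key u v u.isLt v.isLt hlt hsum'
      exact this
    · exact absurd (Fin.val_injective heq) hne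
    · have h' := key v u v.isLt u.isLt hlt (by omega)
      have h'' : G.Adj v u := h'
      exact h''.symm
  have hzp : 2 * 0 + k ≤ k := by omega
  have hzv : 0 + k < n := by omega
  have hedges : ∀ e ∈ (zig n k k 0 hzp hzv).edges, e ∈ G.edgeSet := by
    intro e he
    exact edgeSet_mono hle ((zig n k k 0 hzp hzv).edges_subset_edgeSet he)
  have hfin := walk_containsLF ((zig n k k 0 hzp hzv).transfer G hedges)
    ((zig_isPath n k k 0 hzp hzv).transfer hedges)
  rw [Walk.length_transfer, zig_length n k k 0 hzp hzv] at hfin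
  exact h2 hfin
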